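/- arXiv:1201.5757 — 2 statements merged into one kernel-verified Lean document; each statement's English description precedes it below -/
import Mathlib

section
/- Let (w_n) be a sequence of words with w_{n+1} a concatenation of q_n ≥ 2 cyclic rotations of w_n, and h_n = |w_n|. Then the number of distinct subwords of w_{n+1} of length h_n is at most h_n^3 - h_n^2 + h_n. -/
/-- Cyclic rotation of a word by an integer number of positions. -/
def rho {α : Type*} (w : List α) (a : ℤ) : List α :=
  w.rotate (a % (w.length : ℤ)).toNat

lemma key_blocks {α : Type*} {h : ℕ} (hpos : 0 < h) :
    ∀ (L : List (List α)), (∀ b ∈ L, b.length = h) → ∀ (k : ℕ) (u : List α),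
      u.length = h → u <+: (L.flatten.drop k) →
      ∃ i < h, ∃ b ∈ L, ∃ b' ∈ L, u = b.drop i ++ b'.take i := by
  intro L
  induction L with
  | nil =>
      intro _ k u hu hpre
      simp only [List.flatten_nil, List.drop_nil] at hpre
      have := List.prefix_nil.mp hpre
      subst this
      simp at hu
      omega
  | cons b L ih =>
      intro hlen k u hu hpre
      have hb : b.length = h := hlen b (by simp)
      by_cases hk : k < h
      · have hdrop : ((b :: L).flatten).drop k = b.drop k ++ L.flatten := by
          rw [List.flatten_cons, List.drop_append_of_le_length (by omega)]
        rw [hdrop] at hpre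
        obtain ⟨t, ht⟩ := hpre
        have hu' : u = (b.drop k ++ L.flatten).take h := by
          rw [← ht, List.take_append,
            List.take_of_length_le (by simp [hu])]
          simp [hu]
        have hlen1 : (b.drop k).length = h - k := by simp [hb]
        rw [List.take_append, List.take_of_length_le (by omega), hlen1] at hu'
        have hk' : h - (h - k) = k := by omega
        rw [hk'] at hu'
        rcases Nat.eq_zero_or_pos k with rfl | hkpos
        · refine ⟨0, hpos, b, by simp, b, by simp, ?_⟩
          simpa using hu'
        · cases L with
          | nil =>
              exfalso
              simp at hu'
              have : u.length = h - k := by rw [hu']; simp [hb]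
              omega
          | cons b' L' =>
              have hb' : b'.length = h := hlen b' (by simp)
              refine ⟨k, hk, b, by simp, b', by simp, ?_⟩
              rw [hu', List.flatten_cons, List.take_append_of_le_length (by omega)]
      · have hdrop : ((b :: L).flatten).drop k = L.flatten.drop (k - h) := by
          have hk2 : k = b.length + (k - h) := by omega
          rw [List.flatten_cons]
          conv_lhs => rw [hk2]
          rw [List.drop_append]; simp [hb]
        rw [hdrop] at hpre
        obtain ⟨i, hi, b1, hb1, b2, hb2, heq⟩ :=
          ih (fun x hx => hlen x (by simp [hx])) (k - h) u hu hpre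
        exact ⟨i, hi, b1, by simp [hb1], b2, by simp [hb2], heq⟩

/-- If `W` is a concatenation of `q ≥ 2` cyclic rotations of a nonempty word `w`
of length `h`, then the number of distinct subwords of `W` of length `h` is at
most `h³ - h² + h`. -/
theorem complexity_upper_bound_eq {α : Type*} (w : List α) (hw : w ≠ [])
    (q : ℕ) (hq : 2 ≤ q) (a : Fin q → ℤ) (W : List α)
    (hW : W = (List.ofFn fun j => rho w (a j)).flatten) :
    {u : List α | u.length = w.length ∧ u <:+: W}.ncard
      ≤ w.length ^ 3 - w.length ^ 2 + w.length := by
  classical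
  set h := w.length with hh
  have hpos : 0 < h := List.length_pos_iff.mpr hw
  set F : ℕ × ℕ × ℕ → List α :=
    fun p => (w.rotate p.2.1).drop p.1 ++ (w.rotate p.2.2).take p.1 with hF
  set D : Finset (ℕ × ℕ × ℕ) :=
    ({0} ×ˢ Finset.range h ×ˢ {0}) ∪
      (Finset.Ioo 0 h ×ˢ Finset.range h ×ˢ Finset.range h) with hD
  have hsub : {u : List α | u.length = w.length ∧ u <:+: W} ⊆ ↑(D.image F) := by
    rintro u ⟨hul, hinf⟩
    obtain ⟨s, t, hst⟩ := hinf
    have hpre : u <+: W.drop s.length := by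
      rw [← hst, List.append_assoc, List.drop_left]
      exact ⟨t, rfl⟩
    rw [hW] at hpre
    have hlen : ∀ b ∈ (List.ofFn fun j => rho w (a j)), b.length = h := by
      intro b hb
      rw [List.mem_ofFn] at hb
      obtain ⟨j, rfl⟩ := hb
      simp [rho, hh]
    obtain ⟨i, hi, b1, hb1, b2, hb2, heq⟩ :=
      key_blocks hpos _ hlen s.length u hul hpre
    rw [List.mem_ofFn] at hb1 hb2
    obtain ⟨j1, rfl⟩ := hb1
    obtain ⟨j2, rfl⟩ := hb2
    have hmod : ∀ j : Fin q, ((a j) % (h : ℤ)).toNat < h := by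
      intro j
      have h1 : 0 ≤ (a j) % (h : ℤ) := Int.emod_nonneg _ (by exact_mod_cast hpos.ne')
      have h2 : (a j) % (h : ℤ) < h := Int.emod_lt_of_pos _ (by exact_mod_cast hpos)
      omega
    simp only [Finset.coe_image, Set.mem_image, Finset.mem_coe]
    rcases Nat.eq_zero_or_pos i with rfl | hipos
    · refine ⟨(0, ((a j1) % (h : ℤ)).toNat, 0), ?_, ?_⟩
      · simp [hD, Finset.mem_union, hmod j1]
      · simp [hF, heq, rho, hh]
    · refine ⟨(i, ((a j1) % (h : ℤ)).toNat, ((a j2) % (h : ℤ)).toNat), ?_, ?_⟩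
      · simp [hD, Finset.mem_union, Finset.mem_Ioo, hipos, hi, hmod j1, hmod j2]
      · simp [hF, heq, rho, hh]
  have hfin : ((D.image F : Finset (List α)) : Set (List α)).Finite := (D.image F).finite_toSet
  calc {u : List α | u.length = w.length ∧ u <:+: W}.ncard
      ≤ ((D.image F : Finset (List α)) : Set (List α)).ncard :=
        Set.ncard_le_ncard hsub hfin
    _ = (D.image F).card := Set.ncard_coe_finset _
    _ ≤ D.card := Finset.card_image_le
    _ ≤ ({0} ×ˢ Finset.range h ×ˢ ({0} : Finset ℕ)).card +
          (Finset.Ioo 0 h ×ˢ Finset.range h ×ˢ Finset.range h).card :=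
        Finset.card_union_le _ _
    _ ≤ h + (h - 1) * (h * h) := by
        simp [Finset.card_product, Nat.card_Ioo]
    _ ≤ h ^ 3 - h ^ 2 + h := by
        obtain ⟨n, hn⟩ : ∃ n, h = n + 1 := ⟨h - 1, by omega⟩
        rw [hn]
        have h3 : (n + 1) ^ 3 = n * ((n + 1) * (n + 1)) + (n + 1) ^ 2 := by ring
        rw [h3, Nat.add_sub_cancel, Nat.add_sub_cancel]
        exact le_of_eq (Nat.add_comm _ _)
end

section
/- Let w_{n+1} = ρ_{α(0)}(w_n) 0^{s_0} ρ_{α(1)}(w_n) 0^{s_1} ⋯ ρ_{α(q-1)}(w_n) 0^{s_{q-1}} be an iceberg word with spacers, h_n = |w_n|. Consider a subword v = u_1 0^s u_2 of length h_n+1 where u_1 is a suffix of ρ_{φ_1}(w_n), 0^s is a full spacer, and u_2 is a prefix of ρ_{φ_2}(w_n). Then for any ν ≥ 1, the word ṽ = ũ_1 0^{s+ν} u_2, where ũ_1 is the suffix of ρ_{φ_1 - ν}(w_n) of length |u_1| - ν, differs from v in at most ν letter positions (melting word effect). -/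
lemma zip_self_eq_map {α : Type*} (l : List α) : l.zip l = l.map (fun a => (a, a)) := by
  induction l with
  | nil => rfl
  | cons a l ih => simp [List.zip_cons_cons, ih]

/-- Melting word effect. Let `v = u₁ 0^s u₂` be a word of length `h+1` where
`u₁` is the suffix of length `k` of `ρ_{φ₁}(w)`, `0^s` is a spacer and `u₂` is
the prefix of length `h+1-k-s` of `ρ_{φ₂}(w)`. For `ν ≥ 1`, enlarging the
spacer to `0^{s+ν}` and replacing `u₁` by the suffix `u₁t` of length `k - ν` of
`ρ_{φ₁-ν}(w)` produces a word `vt = u₁t 0^{s+ν} u₂` differing from `v` in at most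
`ν` letter positions (Hamming distance at most `ν`). -/
theorem melting_word_effect (w : List Bool) (φ₁ φ₂ k s ν : ℕ)
    (h0 : 0 < w.length) (hν1 : 1 ≤ ν) (hνk : ν ≤ k) (hk : k ≤ w.length)
    (hks : k + s ≤ w.length + 1)
    (u₁ u₂ u₁t v vt : List Bool)
    (hu₁ : u₁ = (w.rotate (φ₁ % w.length)).drop (w.length - k))
    (hu₂ : u₂ = (w.rotate (φ₂ % w.length)).take (w.length + 1 - k - s))
    (hu₁t : u₁t = (rho w ((φ₁ : ℤ) - (ν : ℤ))).drop (w.length - (k - ν)))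
    (hv : v = u₁ ++ List.replicate s false ++ u₂)
    (hvt : vt = u₁t ++ List.replicate (s + ν) false ++ u₂) :
    (v.zip vt).countP (fun p => p.1 != p.2) ≤ ν := by
  set h := w.length with hh
  set m : ℕ := (((φ₁ : ℤ) - (ν : ℤ)) % (h : ℤ)).toNat with hm
  -- key modular fact
  have hmod : (m + ν) % h = φ₁ % h := by
    have hz : (0:ℤ) < (h:ℤ) := by exact_mod_cast h0
    have h1 : ((m : ℤ)) = ((φ₁ : ℤ) - (ν : ℤ)) % (h : ℤ) := by
      rw [hm, Int.toNat_of_nonneg (Int.emod_nonneg _ (by omega))]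
    have h2 : ((m : ℤ) + ν) % h = (φ₁ : ℤ) % h := by
      rw [h1, Int.emod_add_emod]
      ring_nf
    exact_mod_cast h2
  have hlen₁ : u₁.length = k := by
    simp [hu₁, List.length_drop, List.length_rotate]; omega
  have hlen₁t : u₁t.length = k - ν := by
    simp [hu₁t, rho, List.length_drop, List.length_rotate]; omega
  -- u₁t is the first k - ν letters of u₁
  have key : u₁t = u₁.take (k - ν) := by
    apply List.ext_getElem
    · simp [hlen₁t, hlen₁]
    intro i h1 h2
    have hi : i < k - ν := by rwa [hlen₁t] at h1
    simp only [hu₁t, hu₁, rho, ← hm, List.getElem_take, List.getElem_drop,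
      List.getElem_rotate, List.length_rotate]
    congr 1
    have e1 : h - (k - ν) + i + m = (h - k + i) + (m + ν) := by omega
    rw [e1, Nat.add_mod (h - k + i) (m + ν), hmod,
      Nat.add_mod (h - k + i) (φ₁ % h), Nat.mod_mod_of_dvd φ₁ dvd_rfl]
  -- decompose and count
  have hνlen : (u₁.drop (k - ν)).length = ν := by
    rw [List.length_drop, hlen₁]; omega
  have hv' : v = u₁.take (k - ν) ++ (u₁.drop (k - ν) ++ (List.replicate s false ++ u₂)) := by
    conv_lhs => rw [hv, ← List.take_append_drop (k - ν) u₁]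
    simp only [List.append_assoc]
  have hvt' : vt = u₁.take (k - ν) ++ (List.replicate ν false ++ (List.replicate s false ++ u₂)) := by
    rw [hvt, key, Nat.add_comm s ν, List.replicate_add]
    simp only [List.append_assoc]
  rw [hv', hvt', List.zip_append (by simp), List.zip_append (by simp [hνlen]),
    List.countP_append, List.countP_append]
  have c1 : ((u₁.take (k - ν)).zip (u₁.take (k - ν))).countP (fun p => p.1 != p.2) = 0 := by
    rw [zip_self_eq_map, List.countP_map]
    simp [Function.comp]
  have c3 : (((List.replicate s false ++ u₂)).zip
      ((List.replicate s false ++ u₂))).countP (fun p => p.1 != p.2) = 0 := by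
    rw [zip_self_eq_map, List.countP_map]
    simp [Function.comp]
  have c2 : ((u₁.drop (k - ν)).zip (List.replicate ν false)).countP (fun p => p.1 != p.2) ≤ ν :=
    le_trans List.countP_le_length (by simp [hνlen])
  omega
end
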